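/- Gordan's theorem (finite-dimensional): for vectors x_1,...,x_n ∈ ℝ^d and signs y_i ∈ {±1}, exactly one of the following holds: (1) there exists w ∈ ℝ^d with y_i ⟨w, x_i⟩ > 0 for all i; (2) there exists p ∈ Δ_n with Σ_i p_i y_i x_i = 0. -/

import Mathlib

open scoped RealInnerProductSpace

theorem stmt8 (d n : ℕ) (x : Fin n → EuclideanSpace ℝ (Fin d)) (y : Fin n → ℝ)
    (hy : ∀ i, y i = 1 ∨ y i = -1) :
    Xor' (∃ w : EuclideanSpace ℝ (Fin d), ∀ i, 0 < y i * ⟪w, x i⟫)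
      (∃ p ∈ stdSimplex ℝ (Fin n), ∑ i, p i • (y i • x i) = (0 : EuclideanSpace ℝ (Fin d))) := by
  set v : Fin n → EuclideanSpace ℝ (Fin d) := fun i => y i • x i with hv
  have key : ∀ w i, y i * ⟪w, x i⟫ = ⟪w, v i⟫ := by
    intro w i; rw [hv]; simp only [real_inner_smul_right]; try ring
  have notboth : ¬ ((∃ w : EuclideanSpace ℝ (Fin d), ∀ i, 0 < y i * ⟪w, x i⟫) ∧
      (∃ p ∈ stdSimplex ℝ (Fin n), ∑ i, p i • (y i • x i) = (0 : EuclideanSpace ℝ (Fin d)))) := by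
    rintro ⟨⟨w, hw⟩, ⟨p, ⟨hp0, hp1⟩, hps⟩⟩
    have h1 : ⟪w, ∑ i, p i • v i⟫ = 0 := by rw [hps]; simp
    rw [inner_sum] at h1
    simp only [real_inner_smul_right] at h1
    -- each term nonneg, sum of p = 1 so some p i > 0
    by_cases hn : n = 0
    · subst hn; simp at hp1
    have hpos : 0 < ∑ i, p i * ⟪w, v i⟫ := by
      obtain ⟨j, hj⟩ : ∃ j, 0 < p j := by
        by_contra h
        push_neg at h
        have : ∑ i, p i = 0 := Finset.sum_eq_zero fun i _ => le_antisymm (h i) (hp0 i)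
        rw [hp1] at this; norm_num at this
      have := key w
      refine Finset.sum_pos' (fun i _ => mul_nonneg (hp0 i) (le_of_lt ?_)) ⟨j, Finset.mem_univ j, mul_pos hj ?_⟩
      · rw [← this i]; exact hw i
      · rw [← this j]; exact hw j
    rw [h1] at hpos; exact lt_irrefl 0 hpos
  rcases Classical.em (∃ p ∈ stdSimplex ℝ (Fin n), ∑ i, p i • (y i • x i)
      = (0 : EuclideanSpace ℝ (Fin d))) with h2 | h2
  · exact Or.inr ⟨h2, fun h1 => notboth ⟨h1, h2⟩⟩
  · -- 0 not in convex hull of range v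
    have h0 : (0 : EuclideanSpace ℝ (Fin d)) ∉ convexHull ℝ (Set.range v) := by
      intro hmem
      rw [convexHull_range_eq_exists_affineCombination] at hmem
      obtain ⟨s, w, hw0, hw1, hwc⟩ := hmem
      apply h2
      refine ⟨fun i => if i ∈ s then w i else 0, ⟨fun i => by simp only; split_ifs with h; exacts [hw0 i h, le_rfl], ?_⟩, ?_⟩
      · rw [Finset.sum_ite_mem, Finset.univ_inter, hw1]
      · rw [Finset.affineCombination_eq_linear_combination s v w hw1] at hwc
        rw [← hwc]
        rw [← Finset.sum_subset (Finset.subset_univ s)]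
        · exact Finset.sum_congr rfl fun i hi => by simp [hi, hv]
        · intro i _ hi; simp [hi]
    obtain ⟨f, c, hfc, hfs⟩ := geometric_hahn_banach_point_closed
      ((convex_convexHull ℝ _)) ((Set.finite_range v).isClosed_convexHull ℝ) h0
    have hc : 0 < c := by simpa using hfc
    set w := (InnerProductSpace.toDual ℝ (EuclideanSpace ℝ (Fin d))).symm f with hwdef
    refine Or.inl ⟨⟨w, fun i => ?_⟩, fun h => notboth ⟨⟨w, fun i => ?_⟩, h⟩⟩ <;>
    · rw [key w i]
      have hfi : c < f (v i) := hfs _ (subset_convexHull ℝ _ ⟨i, rfl⟩)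
      have : ⟪w, v i⟫ = f (v i) := by
        rw [hwdef]; exact InnerProductSpace.toDual_symm_apply
      rw [this]; exact lt_trans hc hfi
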